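/- Let E be a strictly convex real normed space, K ⊆ E nonempty, closed, bounded and convex, (λ_n) a sequence in (0,1) with ∑ λ_n = 1, and (f_n) a sequence of nonexpansive self-maps of K with ⋂_n Fix(f_n) ≠ ∅. Then f = ∑_n λ_n f_n is a well-defined nonexpansive self-map of K and Fix(f) = ⋂_n Fix(f_n). -/

import Mathlib

theorem bruck_intersection_of_fixedPointSets
    {E : Type*} [NormedAddCommGroup E] [NormedSpace ℝ E] [CompleteSpace E]
    [StrictConvexSpace ℝ E]
    (K : Set E) (hne : K.Nonempty) (hcl : IsClosed K)
    (hbd : Bornology.IsBounded K) (hconv : Convex ℝ K)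
    (l : ℕ → ℝ) (hl : ∀ n, l n ∈ Set.Ioo (0:ℝ) 1) (hsum : HasSum l 1)
    (fN : ℕ → E → E) (hmaps : ∀ n, Set.MapsTo (fN n) K K)
    (hnonexp : ∀ n, ∀ x ∈ K, ∀ y ∈ K, ‖fN n x - fN n y‖ ≤ ‖x - y‖)
    (hfix : (⋂ n, {x | x ∈ K ∧ fN n x = x}).Nonempty) :
    (∀ x ∈ K, Summable fun n => l n • fN n x) ∧
    Set.MapsTo (fun x => ∑' n, l n • fN n x) K K ∧
    (∀ x ∈ K, ∀ y ∈ K, ‖(∑' n, l n • fN n x) - ∑' n, l n • fN n y‖ ≤ ‖x - y‖) ∧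
    {x | x ∈ K ∧ (∑' n, l n • fN n x) = x} = ⋂ n, {x | x ∈ K ∧ fN n x = x} := by
  obtain ⟨C, hC⟩ := hbd.exists_norm_le
  have hlsum : Summable l := hsum.summable
  have hlpos : ∀ n, 0 < l n := fun n => (hl n).1
  -- summability
  have hS : ∀ x ∈ K, Summable fun n => l n • fN n x := by
    intro x hx
    apply Summable.of_norm
    refine Summable.of_nonneg_of_le (fun n => norm_nonneg _) (fun n => ?_) (hlsum.mul_right C)
    rw [norm_smul, Real.norm_eq_abs, abs_of_pos (hlpos n)]
    exact mul_le_mul_of_nonneg_left (hC _ (hmaps n hx)) (hlpos n).le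
  -- maps to
  have hmem : ∀ x ∈ K, (∑' n, l n • fN n x) ∈ K := by
    intro x hx
    have hts := (hS x hx).hasSum.tendsto_sum_nat
    have htl := hsum.tendsto_sum_nat
    have hcomb : Filter.Tendsto
        (fun N => (∑ n ∈ Finset.range N, l n)⁻¹ • ∑ n ∈ Finset.range N, l n • fN n x)
        Filter.atTop (nhds ((1:ℝ)⁻¹ • ∑' n, l n • fN n x)) :=
      (htl.inv₀ one_ne_zero).smul hts
    rw [inv_one, one_smul] at hcomb
    refine hcl.mem_of_tendsto hcomb ?_
    filter_upwards [Filter.eventually_ge_atTop 1] with N hN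
    have htpos : 0 < ∑ n ∈ Finset.range N, l n :=
      Finset.sum_pos (fun n _ => hlpos n) (Finset.nonempty_range_iff.2 (by omega))
    rw [Finset.smul_sum]
    simp only [smul_smul]
    refine hconv.sum_mem (fun n _ => ?_) ?_ (fun n _ => hmaps n hx)
    · exact mul_nonneg (inv_nonneg.2 htpos.le) (hlpos n).le
    · rw [← Finset.mul_sum, inv_mul_cancel₀ (ne_of_gt htpos)]
  -- nonexpansive
  have hnon : ∀ x ∈ K, ∀ y ∈ K,
      ‖(∑' n, l n • fN n x) - ∑' n, l n • fN n y‖ ≤ ‖x - y‖ := by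
    intro x hx y hy
    rw [← Summable.tsum_sub (hS x hx) (hS y hy)]
    have hb : ∀ n, ‖l n • fN n x - l n • fN n y‖ ≤ l n * ‖x - y‖ := by
      intro n
      rw [← smul_sub, norm_smul, Real.norm_eq_abs, abs_of_pos (hlpos n)]
      exact mul_le_mul_of_nonneg_left (hnonexp n x hx y hy) (hlpos n).le
    have hsn : Summable fun n => ‖l n • fN n x - l n • fN n y‖ :=
      Summable.of_nonneg_of_le (fun n => norm_nonneg _) hb (hlsum.mul_right _)
    calc ‖∑' n, (l n • fN n x - l n • fN n y)‖
        ≤ ∑' n, ‖l n • fN n x - l n • fN n y‖ := norm_tsum_le_tsum_norm hsn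
      _ ≤ ∑' n, l n * ‖x - y‖ := Summable.tsum_le_tsum hb hsn (hlsum.mul_right _)
      _ = ‖x - y‖ := by rw [tsum_mul_right, hsum.tsum_eq, one_mul]
  -- fixed point of all implies fixed point of sum
  have hfixpt : ∀ p : E, (∀ n, fN n p = p) → (∑' n, l n • fN n p) = p := by
    intro p hp
    simp only [hp]
    rw [Summable.tsum_smul_const hlsum, hsum.tsum_eq, one_smul]
  refine ⟨hS, fun x hx => hmem x hx, hnon, ?_⟩
  obtain ⟨p, hp⟩ := hfix
  simp only [Set.mem_iInter, Set.mem_setOf_eq] at hp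
  have hpK : p ∈ K := (hp 0).1
  have hpfix : ∀ n, fN n p = p := fun n => (hp n).2
  ext x
  simp only [Set.mem_iInter, Set.mem_setOf_eq]
  constructor
  · rintro ⟨hxK, hfx⟩ m
    refine ⟨hxK, ?_⟩
    set d := ‖x - p‖ with hd
    set u : ℕ → E := fun n => fN n x - p with hu
    have hup : ∀ n, ‖u n‖ ≤ d := by
      intro n
      have := hnonexp n x hxK p hpK
      rwa [hpfix n] at this
    have hSp : Summable fun n => l n • p := hlsum.smul_const p
    have hSu : Summable fun n => l n • u n := by
      simp only [hu, smul_sub]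
      exact (hS x hxK).sub hSp
    have key : ∑' n, l n • u n = x - p := by
      simp only [hu, smul_sub]
      rw [Summable.tsum_sub (hS x hxK) hSp, hfx, Summable.tsum_smul_const hlsum, hsum.tsum_eq, one_smul]
    rcases eq_or_lt_of_le (norm_nonneg (x - p)) with hd0 | hdpos
    · have hxp : x = p := by
        rw [← sub_eq_zero]
        exact norm_eq_zero.1 hd0.symm
      rw [hxp, hpfix m]
    · -- d > 0 case
      set a : E := l m • u m with ha
      set b : E := ∑' n, if n = m then 0 else l n • u n with hb
      have hab : x - p = a + b := by
        rw [← key, Summable.tsum_eq_add_tsum_ite hSu m]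
      have hgb : ∀ n, ‖(if n = m then 0 else l n • u n : E)‖ ≤ if n = m then 0 else l n * d := by
        intro n
        split
        · simp
        · rw [norm_smul, Real.norm_eq_abs, abs_of_pos (hlpos n)]
          exact mul_le_mul_of_nonneg_left (hup n) (hlpos n).le
      have hsumite : Summable fun n => if n = m then 0 else l n * d := by
        have hnn : ∀ n : ℕ, 0 ≤ if n = m then 0 else l n * d := by
          intro n; split
          · exact le_refl _
          · exact mul_nonneg (hlpos n).le (le_trans hdpos.le (le_of_eq rfl))
        refine Summable.of_nonneg_of_le hnn (fun n => ?_) (hlsum.mul_right d)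
        split
        · exact mul_nonneg (hlpos n).le (le_trans hdpos.le (le_of_eq rfl))
        · exact le_refl _
      have hgbn : Summable fun n => ‖(if n = m then 0 else l n • u n : E)‖ :=
        Summable.of_nonneg_of_le (fun n => norm_nonneg _) hgb hsumite
      have hgbs : Summable fun n => (if n = m then 0 else l n • u n : E) :=
        Summable.of_norm hgbn
      have hite_sum : ∑' n, (if n = m then 0 else l n * d) = (1 - l m) * d := by
        have h1 : ∑' n, l n * d = l m * d + ∑' n, (if n = m then 0 else l n * d) :=
          Summable.tsum_eq_add_tsum_ite (hlsum.mul_right d) m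
        rw [tsum_mul_right, hsum.tsum_eq, one_mul] at h1
        linarith
      have hbnorm : ‖b‖ ≤ (1 - l m) * d := by
        calc ‖b‖ ≤ ∑' n, ‖(if n = m then 0 else l n • u n : E)‖ :=
              norm_tsum_le_tsum_norm hgbn
          _ ≤ ∑' n, (if n = m then 0 else l n * d) := Summable.tsum_le_tsum hgb hgbn hsumite
          _ = (1 - l m) * d := hite_sum
      have hanorm : ‖a‖ ≤ l m * d := by
        rw [ha, norm_smul, Real.norm_eq_abs, abs_of_pos (hlpos m)]
        exact mul_le_mul_of_nonneg_left (hup m) (hlpos m).le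
      have htot : ‖a + b‖ = d := by rw [hd, hab]
      have hnr : ‖a + b‖ ≤ ‖a‖ + ‖b‖ := norm_add_le a b
      have haeq : ‖a‖ = l m * d := by linarith
      have hbeq : ‖b‖ = (1 - l m) * d := by linarith
      have hsr : SameRay ℝ a b := sameRay_iff_norm_add.2 (by linarith)
      have hkey : ‖a‖ • b = ‖b‖ • a := hsr.norm_smul_eq
      rw [haeq, hbeq] at hkey
      have hlm := hlpos m
      have hlmd : l m * d ≠ 0 := by positivity
      have hb' : b = ((1 - l m) / l m) • a := by
        have h2 : b = (l m * d)⁻¹ • ((1 - l m) * d) • a := by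
          rw [← hkey, inv_smul_smul₀ hlmd]
        rw [h2, smul_smul]
        congr 1
        field_simp
        exact mul_div_cancel_left₀ _ (ne_of_gt hdpos)
      have hum : x - p = u m := by
        rw [hab, hb', ha, smul_smul, div_mul_cancel₀ _ (ne_of_gt hlm), ← add_smul]
        norm_num
      have : fN m x = x := by
        have := hum
        rw [hu] at this
        simp only at this
        have h3 : fN m x - p = x - p := this.symm
        exact sub_left_inj.1 h3
      exact this
  · intro h
    exact ⟨(h 0).1, hfixpt x (fun n => (h n).2)⟩
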